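/- In the ROBDD-based compression scheme, the total lengths of the level strings satisfy ∑_{i=2}^{k+1} Q_i ≤ ∑_{i=2}^{k+1} |S_i|, where Q_i is the sum of the exponents q over the distinct Type II entries A_m^q of Ŝ_i. (Each Type II symbol A_m^q with q > 1 forces q−1 further occurrences A_m^{q−1},...,A_m in later strings, so the total exponent sum is dominated by the total length of all strings.) -/

import Mathlib

/-- The class `𝒢` of level-labeled rooted DAGs used to represent data strings:
finitely many vertices, a root at level 1, exactly two terminal vertices `T0, T1` at a
common level `k+1`, every nonterminal vertex has out-edges labeled `0` and `1` ending at
distinct vertices, levels strictly increase along edges, and every vertex is reachable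
from the root.  (A vertex is terminal iff it equals `T0` or `T1`; `succ0, succ1` are
only meaningful on nonterminal vertices.) -/
structure BDD (V : Type) [Fintype V] [DecidableEq V] where
  k : ℕ
  root : V
  T0 : V
  T1 : V
  succ0 : V → V
  succ1 : V → V
  level : V → ℕ
  k_pos : 1 ≤ k
  T0_ne_T1 : T0 ≠ T1
  root_level : level root = 1
  T0_level : level T0 = k + 1
  T1_level : level T1 = k + 1
  level_le : ∀ v, level v ≤ k + 1
  succ_ne : ∀ v, v ≠ T0 → v ≠ T1 → succ0 v ≠ succ1 v
  level_lt_succ0 : ∀ v, v ≠ T0 → v ≠ T1 → level v < level (succ0 v)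
  level_lt_succ1 : ∀ v, v ≠ T0 → v ≠ T1 → level v < level (succ1 v)
  reachable : ∀ v, Relation.ReflTransGen
    (fun a b => a ≠ T0 ∧ a ≠ T1 ∧ (b = succ0 a ∨ b = succ1 a)) root v

/-- `φ` is the canonical string map of `G`: `φ(T0) = 0`, `φ(T1) = 1`, and for a
nonterminal vertex `V` with `0`- and `1`-successors `V₀, V₁`,
`φ(V) = φ(V₀)^{2^{L(V₀)−L(V)−1}} φ(V₁)^{2^{L(V₁)−L(V)−1}}`
(the defining recursion of the canonical map; it determines `φ` uniquely). -/
def IsPhi {V : Type} [Fintype V] [DecidableEq V] (G : BDD V) (φ : V → List Bool) : Prop :=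
  φ G.T0 = [false] ∧ φ G.T1 = [true] ∧
  ∀ v, v ≠ G.T0 → v ≠ G.T1 →
    φ v = (List.replicate (2 ^ (G.level (G.succ0 v) - G.level v - 1)) (φ (G.succ0 v))).flatten
        ++ (List.replicate (2 ^ (G.level (G.succ1 v) - G.level v - 1)) (φ (G.succ1 v))).flatten

/-- The list of distinct entries of a sequence, in order of first left-to-right
appearance. -/
def firstOccs {A : Type*} [DecidableEq A] : List A → List A
  | [] => []
  | a :: rest => a :: (firstOccs rest).filter (· ≠ a)

variable {V : Type} [Fintype V] [DecidableEq V]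

/-- One step of the recursive generation of the level strings: from `S_{i−1}`, take the
first occurrences of its distinct symbols; a symbol `A_m^q` with `q > 1` produces
`A_m^{q−1}`; a symbol `A_m` (i.e. `q = 1`, a nonterminal vertex) produces the pair
`A_{m₀}^{L(A_{m₀})−L(A_m)}, A_{m₁}^{L(A_{m₁})−L(A_m)}` where `A_{m₀}, A_{m₁}` are its
`0`- and `1`-successors.  A symbol `A_m^q` is represented as the pair `(A_m, q)`. -/
def nextS (G : BDD V) (s : List (V × ℕ)) : List (V × ℕ) :=
  (firstOccs s).flatMap fun p =>
    if 1 < p.2 then [(p.1, p.2 - 1)]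
    else [(G.succ0 p.1, G.level (G.succ0 p.1) - G.level p.1),
          (G.succ1 p.1, G.level (G.succ1 p.1) - G.level p.1)]

/-- The level strings: `Sstr G (i-1)` is the paper's `S_i`, so `Sstr G 0 = S_1 = (A_1)`
consists of the root alone. -/
def Sstr (G : BDD V) : ℕ → List (V × ℕ)
  | 0 => [(G.root, 1)]
  | i + 1 => nextS G (Sstr G i)

/-- `Ŝ_i` (for the paper's index `i ≥ 2`): the subsequence of `S_i` arising from the
substitutions for the distinct entries of `S_{i−1}` of the form `A_m` (i.e. `q = 1`). -/
def Shat (G : BDD V) (i : ℕ) : List (V × ℕ) :=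
  (firstOccs (Sstr G (i - 2))).flatMap fun p =>
    if 1 < p.2 then []
    else [(G.succ0 p.1, G.level (G.succ0 p.1) - G.level p.1),
          (G.succ1 p.1, G.level (G.succ1 p.1) - G.level p.1)]

/-- The vertices that have appeared in the paper's strings `S_1, ..., S_{i−1}`. -/
def appearedBefore (G : BDD V) (i : ℕ) : List V :=
  (List.range (i - 1)).flatMap fun j => (Sstr G j).map Prod.fst

/-- `Q_i`: the sum of the exponents `q` over the distinct Type II entries `A_m^q` of
`Ŝ_i` (those whose vertex `A_m` has not appeared in `S_1, ..., S_{i−1}`). -/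
def Qsum (G : BDD V) (i : ℕ) : ℕ :=
  (((firstOccs (Shat G i)).filter
      (fun p => decide (p.1 ∉ appearedBefore G i))).map Prod.snd).sum

section Aux

lemma mem_firstOccs {A : Type*} [DecidableEq A] {l : List A} {a : A} :
    a ∈ firstOccs l ↔ a ∈ l := by
  induction l with
  | nil => simp [firstOccs]
  | cons b t ih =>
    simp only [firstOccs, List.mem_cons, List.mem_filter, ih, decide_eq_true_eq, ne_eq]
    by_cases h : a = b <;> simp [h]

lemma nodup_firstOccs {A : Type*} [DecidableEq A] (l : List A) : (firstOccs l).Nodup := by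
  induction l with
  | nil => simp [firstOccs]
  | cons b t ih =>
    refine List.Nodup.cons ?_ (ih.filter _)
    intro h
    have := (List.mem_filter.1 h).2
    simp at this

variable {V : Type} [Fintype V] [DecidableEq V]

lemma Sstr_succ (G : BDD V) (j : ℕ) : Sstr G (j + 1) = nextS G (Sstr G j) := rfl

lemma inv (G : BDD V) : ∀ j, j ≤ G.k → ∀ p ∈ Sstr G j, G.level p.1 = j + p.2 ∧ 1 ≤ p.2 := by
  intro j
  induction j with
  | zero =>
    intro _ p hp
    simp only [Sstr, List.mem_singleton] at hp
    subst hp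
    simp [G.root_level]
  | succ j ih =>
    intro hj p hp
    rw [Sstr_succ, nextS, List.mem_flatMap] at hp
    obtain ⟨x, hx, hpx⟩ := hp
    rw [mem_firstOccs] at hx
    obtain ⟨hlev, hq⟩ := ih (by omega) x hx
    by_cases h1 : 1 < x.2
    · rw [if_pos h1, List.mem_singleton] at hpx
      subst hpx
      constructor <;> simp <;> omega
    · rw [if_neg h1] at hpx
      have hx2 : x.2 = 1 := by omega
      have hlx : G.level x.1 = j + 1 := by omega
      have hT0 : x.1 ≠ G.T0 := by
        intro h; rw [h, G.T0_level] at hlx; omega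
      have hT1 : x.1 ≠ G.T1 := by
        intro h; rw [h, G.T1_level] at hlx; omega
      have h0 := G.level_lt_succ0 x.1 hT0 hT1
      have h1' := G.level_lt_succ1 x.1 hT0 hT1
      simp only [List.mem_cons, List.mem_singleton, List.not_mem_nil, or_false] at hpx
      rcases hpx with rfl | rfl
      · constructor <;> simp <;> omega
      · constructor <;> simp <;> omega

lemma decrement (G : BDD V) {j : ℕ} {v : V} {q : ℕ} (h : (v, q) ∈ Sstr G j) (hq : 1 < q) :
    (v, q - 1) ∈ Sstr G (j + 1) := by
  rw [Sstr_succ, nextS, List.mem_flatMap]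
  refine ⟨(v, q), mem_firstOccs.2 h, ?_⟩
  rw [if_pos hq]
  simp

lemma chain (G : BDD V) {j : ℕ} {v : V} {q : ℕ} (h : (v, q) ∈ Sstr G j) :
    ∀ t, t < q → (v, q - t) ∈ Sstr G (j + t) := by
  intro t
  induction t with
  | zero => intro _; simpa using h
  | succ t ih =>
    intro ht
    have h2 : 1 < q - t := by omega
    have := decrement G (ih (by omega)) h2
    have he : q - t - 1 = q - (t + 1) := by omega
    rw [he] at this
    exact this

lemma shat_sub (G : BDD V) (j : ℕ) : ∀ p ∈ Shat G (j + 2), p ∈ Sstr G (j + 1) := by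
  intro p hp
  rw [Shat, List.mem_flatMap] at hp
  obtain ⟨x, hx, hpx⟩ := hp
  have hj : j + 2 - 2 = j := by omega
  rw [hj] at hx
  by_cases h1 : 1 < x.2
  · rw [if_pos h1] at hpx; simp at hpx
  · rw [if_neg h1] at hpx
    rw [Sstr_succ, nextS, List.mem_flatMap]
    exact ⟨x, hx, by rwa [if_neg h1]⟩

/-- The list of Type II entries at paper index `j+2`. -/
def Tlist (G : BDD V) (j : ℕ) : List (V × ℕ) :=
  (firstOccs (Shat G (j + 2))).filter
    (fun p => decide (p.1 ∉ appearedBefore G (j + 2)))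

lemma Qsum_eq (G : BDD V) (j : ℕ) :
    Qsum G (j + 2) = ∑ p ∈ (Tlist G j).toFinset, p.2 := by
  rw [Qsum]
  rw [← List.sum_toFinset _ ((nodup_firstOccs _).filter _)]
  rfl

lemma mem_Tlist (G : BDD V) {j : ℕ} {v : V} {q : ℕ} (h : (v, q) ∈ Tlist G j) :
    (v, q) ∈ Sstr G (j + 1) ∧ v ∉ appearedBefore G (j + 2) := by
  rw [Tlist, List.mem_filter, mem_firstOccs] at h
  exact ⟨shat_sub G j _ h.1, by simpa using h.2⟩

lemma mem_appearedBefore (G : BDD V) {i : ℕ} {v : V} :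
    v ∈ appearedBefore G i ↔ ∃ j < i - 1, v ∈ (Sstr G j).map Prod.fst := by
  simp [appearedBefore, List.mem_flatMap]

lemma Tlist_unique (G : BDD V) {j j' : ℕ} {v : V} {q q' : ℕ}
    (hj : j < G.k) (hj' : j' < G.k)
    (h : (v, q) ∈ Tlist G j) (h' : (v, q') ∈ Tlist G j') : j = j' ∧ q = q' := by
  obtain ⟨hm, hn⟩ := mem_Tlist G h
  obtain ⟨hm', hn'⟩ := mem_Tlist G h'
  have hjj : j = j' := by
    by_contra hne
    rcases Nat.lt_or_ge j j' with hlt | hge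
    · exact hn' ((mem_appearedBefore G).2 ⟨j + 1, by omega,
        List.mem_map.2 ⟨(v, q), hm, rfl⟩⟩)
    · have hlt : j' < j := by omega
      exact hn ((mem_appearedBefore G).2 ⟨j' + 1, by omega,
        List.mem_map.2 ⟨(v, q'), hm', rfl⟩⟩)
  subst hjj
  have i1 := (inv G (j + 1) (by omega) _ hm).1
  have i2 := (inv G (j + 1) (by omega) _ hm').1
  simp only at i1 i2
  exact ⟨rfl, by omega⟩

end Aux

/-- In the ROBDD-based compression scheme, the exponent sums of the Type II entries are
dominated by the total lengths of the level strings: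
`∑_{i=2}^{k+1} Q_i ≤ ∑_{i=2}^{k+1} |S_i|`. -/
theorem Qsum_le_total_length (G : BDD V) :
    ∑ i ∈ Finset.Icc 2 (G.k + 1), Qsum G i
      ≤ ∑ i ∈ Finset.Icc 2 (G.k + 1), (Sstr G (i - 1)).length := by
  have hIcc : Finset.Icc 2 (G.k + 1) = Finset.Ico 2 (G.k + 2) := by
    exact (Finset.Ico_add_one_right_eq_Icc 2 (G.k + 1)).symm
  rw [hIcc, Finset.sum_Ico_eq_sum_range, Finset.sum_Ico_eq_sum_range]
  have hk : G.k + 2 - 2 = G.k := by omega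
  rw [hk]
  have hL : ∀ j ∈ Finset.range G.k,
      Qsum G (2 + j) = ∑ p ∈ (Tlist G j).toFinset, (Finset.Icc (j + 1) (j + p.2)).card := by
    intro j _
    rw [show 2 + j = j + 2 by omega, Qsum_eq]
    exact Finset.sum_congr rfl fun p _ => by rw [Nat.card_Icc]; omega
  rw [Finset.sum_congr rfl hL]
  have hR : ∀ j ∈ Finset.range G.k,
      (Sstr G (2 + j - 1)).length = (Sstr G (j + 1)).length := by
    intro j _; rw [show 2 + j - 1 = j + 1 by omega]
  rw [Finset.sum_congr rfl hR]
  rw [← Finset.sum_sigma ((Finset.range G.k)) (fun j => (Tlist G j).toFinset)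
    (fun x => (Finset.Icc (x.1 + 1) (x.1 + x.2.2)).card)]
  rw [← Finset.card_sigma]
  have key : (((Finset.range G.k).sigma fun j => (Tlist G j).toFinset).sigma
        fun x => Finset.Icc (x.1 + 1) (x.1 + x.2.2)).card
      ≤ ((Finset.Icc 1 G.k).sigma fun m => ((Sstr G m).map Prod.fst).toFinset).card := by
    apply Finset.card_le_card_of_injOn
        (fun (y : Σ _ : ((_ : ℕ) × V × ℕ), ℕ) => (⟨y.2, y.1.2.1⟩ : Σ _ : ℕ, V))
    · rintro ⟨⟨j, v, q⟩, m⟩ hy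
      simp only [Finset.mem_coe, Finset.mem_sigma, Finset.mem_range, List.mem_toFinset,
        Finset.mem_Icc] at hy ⊢
      obtain ⟨⟨hj, hT⟩, hm1, hm2⟩ := hy
      have hmem := (mem_Tlist G hT).1
      obtain ⟨hlev, hq⟩ := inv G (j + 1) (by omega) _ hmem
      simp only at hlev
      have hle := G.level_le v
      have hjq : j + q ≤ G.k := by omega
      refine ⟨⟨by omega, by omega⟩, ?_⟩
      have ht : m - (j + 1) < q := by omega
      have hc := chain G hmem (m - (j + 1)) ht
      rw [show j + 1 + (m - (j + 1)) = m by omega] at hc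
      exact List.mem_map.2 ⟨_, hc, rfl⟩
    · rintro ⟨⟨j, v, q⟩, m⟩ hy ⟨⟨j', v', q'⟩, m'⟩ hy' heq
      simp only [Finset.mem_coe, Finset.mem_sigma, Finset.mem_range,
        List.mem_toFinset] at hy hy'
      simp only [Sigma.ext_iff, heq_eq_eq] at heq
      obtain ⟨rfl, rfl⟩ := heq
      obtain ⟨rfl, rfl⟩ := Tlist_unique G hy.1.1 hy'.1.1 hy.1.2 hy'.1.2
      rfl
  refine le_trans key ?_
  rw [Finset.card_sigma]
  have h1 : ∀ m ∈ Finset.Icc 1 G.k,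
      ((Sstr G m).map Prod.fst).toFinset.card ≤ (Sstr G m).length := by
    intro m _
    calc ((Sstr G m).map Prod.fst).toFinset.card ≤ ((Sstr G m).map Prod.fst).length :=
          List.toFinset_card_le _
      _ = (Sstr G m).length := List.length_map _
  refine le_trans (Finset.sum_le_sum h1) ?_
  rw [show Finset.Icc 1 G.k = Finset.Ico 1 (G.k + 1) from (Finset.Ico_add_one_right_eq_Icc 1 G.k).symm,
    Finset.sum_Ico_eq_sum_range]
  have : G.k + 1 - 1 = G.k := by omega
  rw [this]
  exact le_of_eq (Finset.sum_congr rfl fun j _ => by rw [show 1 + j = j + 1 by omega])
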